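/- Structural rule elimination: every labeled sequent derivable in L_Σ(𝒜) is derivable in the refined labeled calculus L*_Σ(𝒜). -/

import Mathlib

namespace IGL

/-- An alphabet Σ: a nonempty countable type of characters partitioned into a
forward part and a backward part by an involutive converse operation. -/
structure Alphabet where
  Char : Type
  nonempty : Nonempty Char
  countable : Countable Char
  fwd : Char → Prop
  conv : Char → Char
  conv_conv : ∀ x, conv (conv x) = x
  fwd_iff : ∀ x, fwd x ↔ ¬ fwd (conv x)

/-- Formulae of the intuitionistic multi-modal language `L_Σ`. -/
inductive Formula (C : Type) : Type
  | atom : ℕ → Formula C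
  | bot  : Formula C
  | or   : Formula C → Formula C → Formula C
  | and  : Formula C → Formula C → Formula C
  | imp  : Formula C → Formula C → Formula C
  | dia  : C → Formula C → Formula C
  | box  : C → Formula C → Formula C

namespace Formula
/-- Intuitionistic negation `¬A := A ⊃ ⊥`. -/
def neg {C : Type} (A : Formula C) : Formula C := A.imp Formula.bot
/-- `A ≡ B := (A ⊃ B) ∧ (B ⊃ A)`. -/
def equiv {C : Type} (A B : Formula C) : Formula C := (A.imp B).and (B.imp A)
end Formula

/-- Bi-relational Σ-models. -/
structure BiModel (α : Alphabet) where
  W : Type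
  nonempty : Nonempty W
  le : W → W → Prop
  le_refl : ∀ w, le w w
  le_trans : ∀ w u v, le w u → le u v → le w v
  R : α.Char → W → W → Prop
  F1 : ∀ x w v v', R x w v → le v v' → ∃ w', le w w' ∧ R x w' v'
  F2 : ∀ x w w' v, le w w' → R x w v → ∃ v', R x w' v' ∧ le v v'
  F3 : ∀ x w u, R x w u ↔ R (α.conv x) u w
  V : W → ℕ → Prop
  mono : ∀ w u, le w u → ∀ p, V w p → V u p

/-- Satisfaction `M,w ⊩ A`. -/
def Sat {α : Alphabet} (M : BiModel α) : M.W → Formula α.Char → Prop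
  | w, Formula.atom p => M.V w p
  | _, Formula.bot => False
  | w, Formula.or A B => Sat M w A ∨ Sat M w B
  | w, Formula.and A B => Sat M w A ∧ Sat M w B
  | w, Formula.imp A B => ∀ w', M.le w w' → Sat M w' A → Sat M w' B
  | w, Formula.dia x A => ∃ v, M.R x w v ∧ Sat M v A
  | w, Formula.box x A => ∀ w' v', M.le w w' → M.R x w' v' → Sat M v' A

/-- Axioms: seriality axioms `D_x` or intuitionistic path axioms
`(⟨x₁⟩⋯⟨xₙ⟩A ⊃ ⟨x⟩A) ∧ ([x]A ⊃ [x₁]⋯[xₙ]A)`, encoded by the character `x`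
and the string `[x₁,…,xₙ]`. -/
inductive Ax (C : Type) : Type
  | ser : C → Ax C
  | ipa : C → List C → Ax C

/-- Composition of the accessibility relations along a string. -/
def BiModel.Rs {α : Alphabet} (M : BiModel α) : List α.Char → M.W → M.W → Prop
  | [], w, u => w = u
  | x :: s, w, u => ∃ v, M.R x w v ∧ M.Rs s v u

/-- The frame condition corresponding to an axiom. -/
def SatisfiesAx {α : Alphabet} (M : BiModel α) : Ax α.Char → Prop
  | Ax.ser x => ∀ w, ∃ u, M.R x w u
  | Ax.ipa x s => ∀ w u, M.Rs s w u → M.R x w u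

/-- A bi-relational (Σ,𝒜)-model. -/
def AModel {α : Alphabet} (𝒜 : Set (Ax α.Char)) (M : BiModel α) : Prop :=
  ∀ a ∈ 𝒜, SatisfiesAx M a

/-- `⟨x₁⟩⋯⟨xₙ⟩A`. -/
def dias {C : Type} : List C → Formula C → Formula C
  | [], A => A
  | x :: s, A => Formula.dia x (dias s A)

/-- `[x₁]⋯[xₙ]A`. -/
def boxes {C : Type} : List C → Formula C → Formula C
  | [], A => A
  | x :: s, A => Formula.box x (boxes s A)

/-- The Hilbert system `H IK_m(Σ,𝒜)`. -/
inductive Hprf (α : Alphabet) (𝒜 : Set (Ax α.Char)) : Formula α.Char → Prop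
  | ipl1 (A B : Formula α.Char) : Hprf α 𝒜 (A.imp (B.imp A))
  | ipl2 (A B C : Formula α.Char) : Hprf α 𝒜 ((A.imp (B.imp C)).imp ((A.imp B).imp (A.imp C)))
  | ipl3 (A B : Formula α.Char) : Hprf α 𝒜 (A.imp (A.or B))
  | ipl4 (A B : Formula α.Char) : Hprf α 𝒜 (B.imp (A.or B))
  | ipl5 (A B C : Formula α.Char) : Hprf α 𝒜 ((A.imp C).imp ((B.imp C).imp ((A.or B).imp C)))
  | ipl6 (A B : Formula α.Char) : Hprf α 𝒜 ((A.and B).imp A)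
  | ipl7 (A B : Formula α.Char) : Hprf α 𝒜 ((A.and B).imp B)
  | ipl8 (A B : Formula α.Char) : Hprf α 𝒜 (A.imp (B.imp (A.and B)))
  | ipl9 (A : Formula α.Char) : Hprf α 𝒜 (Formula.bot.imp A)
  | axK (x : α.Char) (A B : Formula α.Char) : Hprf α 𝒜 ((Formula.box x (A.imp B)).imp ((Formula.box x A).imp (Formula.box x B)))
  | axBoxAnd (x : α.Char) (A B : Formula α.Char) : Hprf α 𝒜 ((Formula.box x (A.and B)).equiv ((Formula.box x A).and (Formula.box x B)))
  | axDiaOr (x : α.Char) (A B : Formula α.Char) : Hprf α 𝒜 ((Formula.dia x (A.or B)).equiv ((Formula.dia x A).or (Formula.dia x B)))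
  | axKdia (x : α.Char) (A B : Formula α.Char) : Hprf α 𝒜 ((Formula.box x (A.imp B)).imp ((Formula.dia x A).imp (Formula.dia x B)))
  | axBoxDia (x : α.Char) (A B : Formula α.Char) : Hprf α 𝒜 (((Formula.box x A).and (Formula.dia x B)).imp (Formula.dia x (A.and B)))
  | axNotDiaBot (x : α.Char) : Hprf α 𝒜 (Formula.dia x Formula.bot).neg
  | axConv (x : α.Char) (A : Formula α.Char) : Hprf α 𝒜 ((A.imp (Formula.box x (Formula.dia (α.conv x) A))).and
      ((Formula.dia x (Formula.box (α.conv x) A)).imp A))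
  | axFS (x : α.Char) (A B : Formula α.Char) : Hprf α 𝒜 (((Formula.dia x A).imp (Formula.box x B)).imp (Formula.box x (A.imp B)))
  | axDiaImp (x : α.Char) (A B : Formula α.Char) : Hprf α 𝒜 ((Formula.dia x (A.imp B)).imp ((Formula.box x A).imp (Formula.dia x B)))
  | axSer (x : α.Char) (A : Formula α.Char) (h : Ax.ser x ∈ 𝒜) : Hprf α 𝒜 ((Formula.box x A).imp (Formula.dia x A))
  | axIpa (x : α.Char) (s : List α.Char) (A : Formula α.Char) (h : Ax.ipa x s ∈ 𝒜) :
      Hprf α 𝒜 (((dias s A).imp (Formula.dia x A)).and ((Formula.box x A).imp (boxes s A)))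
  | mp (A B : Formula α.Char) : Hprf α 𝒜 (A.imp B) → Hprf α 𝒜 A → Hprf α 𝒜 B
  | nec (x : α.Char) (A : Formula α.Char) : Hprf α 𝒜 A → Hprf α 𝒜 (Formula.box x A)

/-- `B₁ ∧ ⋯ ∧ Bₙ` (left-nested). -/
def conjList {C : Type} : Formula C → List (Formula C) → Formula C
  | A, [] => A
  | A, B :: L => conjList (A.and B) L

/-- `𝒮 ⊢_𝒜 A`: either `A ∈ IK_m(Σ,𝒜)` or `B₁∧⋯∧Bₙ ⊃ A ∈ IK_m(Σ,𝒜)` for some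
`B₁,…,Bₙ ∈ 𝒮`. -/
def HderivFrom (α : Alphabet) (𝒜 : Set (Ax α.Char)) (S : Set (Formula α.Char))
    (A : Formula α.Char) : Prop :=
  Hprf α 𝒜 A ∨ ∃ B L, B ∈ S ∧ (∀ D ∈ L, D ∈ S) ∧ Hprf α 𝒜 ((conjList B L).imp A)

/-! ### Labeled sequents -/

/-- A relational atom `w R_x u`. -/
abbrev Rel (C : Type) := ℕ × C × ℕ
/-- A labeled formula `w : A`. -/
abbrev LF (C : Type) := ℕ × Formula C

def relLabels {C : Type} (R : Multiset (Rel C)) : Set ℕ :=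
  {l | ∃ a ∈ R, a.1 = l ∨ a.2.2 = l}

def lfLabels {C : Type} (Γ : Multiset (LF C)) : Set ℕ :=
  {l | ∃ b ∈ Γ, b.1 = l}

/-- `u` is fresh with respect to the sequent `R, Γ ⊢ v : ⋯`. -/
def freshIn {C : Type} (u : ℕ) (R : Multiset (Rel C)) (Γ : Multiset (LF C)) (v : ℕ) : Prop :=
  u ∉ relLabels R ∧ u ∉ lfLabels Γ ∧ u ≠ v

/-- `Chain s w u m`: the multiset `m` is a chain of relational atoms `w R_s u`
along the string `s` (with `w = u` and `m = 0` when `s = ε`). -/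
inductive Chain {C : Type} : List C → ℕ → ℕ → Multiset (Rel C) → Prop
  | nil (w : ℕ) : Chain [] w w 0
  | cons {x : C} {s : List C} {w v u : ℕ} {m : Multiset (Rel C)} :
      Chain s v u m → Chain (x :: s) w u ((w, x, v) ::ₘ m)

/-- The labeled calculus `L_Σ(𝒜)`, height-indexed: `LD α 𝒜 n R Γ w A` states
that the labeled sequent `R, Γ ⊢ w : A` has a proof of height at most `n`. -/
inductive LD (α : Alphabet) (𝒜 : Set (Ax α.Char)) :
    ℕ → Multiset (Rel α.Char) → Multiset (LF α.Char) → ℕ → Formula α.Char → Prop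
  | id (n : ℕ) (R : Multiset (Rel α.Char)) (Γ : Multiset (LF α.Char)) (w p : ℕ) : LD α 𝒜 n R ((w, Formula.atom p) ::ₘ Γ) w (Formula.atom p)
  | botL (n : ℕ) (R : Multiset (Rel α.Char)) (Γ : Multiset (LF α.Char)) (w u : ℕ) (A : Formula α.Char) : LD α 𝒜 n R ((w, Formula.bot) ::ₘ Γ) u A
  | orL {n : ℕ} {R : Multiset (Rel α.Char)} {Γ : Multiset (LF α.Char)} {w u : ℕ} {A B C : Formula α.Char} :
      LD α 𝒜 n R ((w, A) ::ₘ Γ) u C → LD α 𝒜 n R ((w, B) ::ₘ Γ) u C →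
      LD α 𝒜 (n + 1) R ((w, A.or B) ::ₘ Γ) u C
  | orR1 {n : ℕ} {R : Multiset (Rel α.Char)} {Γ : Multiset (LF α.Char)} {w : ℕ} {A B : Formula α.Char} : LD α 𝒜 n R Γ w A → LD α 𝒜 (n + 1) R Γ w (A.or B)
  | orR2 {n : ℕ} {R : Multiset (Rel α.Char)} {Γ : Multiset (LF α.Char)} {w : ℕ} {A B : Formula α.Char} : LD α 𝒜 n R Γ w B → LD α 𝒜 (n + 1) R Γ w (A.or B)
  | andL {n : ℕ} {R : Multiset (Rel α.Char)} {Γ : Multiset (LF α.Char)} {w u : ℕ} {A B C : Formula α.Char} :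
      LD α 𝒜 n R ((w, A) ::ₘ (w, B) ::ₘ Γ) u C →
      LD α 𝒜 (n + 1) R ((w, A.and B) ::ₘ Γ) u C
  | andR {n : ℕ} {R : Multiset (Rel α.Char)} {Γ : Multiset (LF α.Char)} {w : ℕ} {A B : Formula α.Char} :
      LD α 𝒜 n R Γ w A → LD α 𝒜 n R Γ w B → LD α 𝒜 (n + 1) R Γ w (A.and B)
  | impL {n : ℕ} {R : Multiset (Rel α.Char)} {Γ : Multiset (LF α.Char)} {w u : ℕ} {A B C : Formula α.Char} :
      LD α 𝒜 n R ((w, A.imp B) ::ₘ Γ) w A → LD α 𝒜 n R ((w, B) ::ₘ Γ) u C →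
      LD α 𝒜 (n + 1) R ((w, A.imp B) ::ₘ Γ) u C
  | impR {n : ℕ} {R : Multiset (Rel α.Char)} {Γ : Multiset (LF α.Char)} {w : ℕ} {A B : Formula α.Char} :
      LD α 𝒜 n R ((w, A) ::ₘ Γ) w B → LD α 𝒜 (n + 1) R Γ w (A.imp B)
  | diaL {n : ℕ} {R : Multiset (Rel α.Char)} {Γ : Multiset (LF α.Char)} {w u v : ℕ} {x : α.Char} {A B : Formula α.Char} (hf : freshIn u R ((w, Formula.dia x A) ::ₘ Γ) v) :
      LD α 𝒜 n ((w, x, u) ::ₘ R) ((u, A) ::ₘ Γ) v B →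
      LD α 𝒜 (n + 1) R ((w, Formula.dia x A) ::ₘ Γ) v B
  | diaR {n : ℕ} {R : Multiset (Rel α.Char)} {Γ : Multiset (LF α.Char)} {w u : ℕ} {x : α.Char} {A : Formula α.Char} :
      LD α 𝒜 n ((w, x, u) ::ₘ R) Γ u A →
      LD α 𝒜 (n + 1) ((w, x, u) ::ₘ R) Γ w (Formula.dia x A)
  | boxR {n : ℕ} {R : Multiset (Rel α.Char)} {Γ : Multiset (LF α.Char)} {w u : ℕ} {x : α.Char} {A : Formula α.Char} (hf : freshIn u R Γ w) :
      LD α 𝒜 n ((w, x, u) ::ₘ R) Γ u A → LD α 𝒜 (n + 1) R Γ w (Formula.box x A)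
  | boxL {n : ℕ} {R : Multiset (Rel α.Char)} {Γ : Multiset (LF α.Char)} {w u v : ℕ} {x : α.Char} {A C : Formula α.Char} :
      LD α 𝒜 n ((w, x, u) ::ₘ R) ((w, Formula.box x A) ::ₘ (u, A) ::ₘ Γ) v C →
      LD α 𝒜 (n + 1) ((w, x, u) ::ₘ R) ((w, Formula.box x A) ::ₘ Γ) v C
  | dx {n : ℕ} {R : Multiset (Rel α.Char)} {Γ : Multiset (LF α.Char)} {u v : ℕ} {x : α.Char} {A : Formula α.Char} (w : ℕ) (hax : Ax.ser x ∈ 𝒜) (hf : freshIn u R Γ v) :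
      LD α 𝒜 n ((w, x, u) ::ₘ R) Γ v A → LD α 𝒜 (n + 1) R Γ v A
  | isx {n : ℕ} {R : Multiset (Rel α.Char)} {Γ : Multiset (LF α.Char)} {w u v : ℕ} {s : List α.Char} {x : α.Char} {m : Multiset (Rel α.Char)} {A : Formula α.Char} (hax : Ax.ipa x s ∈ 𝒜) (hc : Chain s w u m) :
      LD α 𝒜 n ((w, x, u) ::ₘ (m + R)) Γ v A → LD α 𝒜 (n + 1) (m + R) Γ v A
  | cx {n : ℕ} {R : Multiset (Rel α.Char)} {Γ : Multiset (LF α.Char)} {w u v : ℕ} {x : α.Char} {A : Formula α.Char} :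
      LD α 𝒜 n ((w, x, u) ::ₘ (u, α.conv x, w) ::ₘ R) Γ v A →
      LD α 𝒜 (n + 1) ((w, x, u) ::ₘ R) Γ v A

/-- Derivability in `L_Σ(𝒜)`. -/
def LDeriv (α : Alphabet) (𝒜 : Set (Ax α.Char)) (R : Multiset (Rel α.Char))
    (Γ : Multiset (LF α.Char)) (w : ℕ) (A : Formula α.Char) : Prop :=
  ∃ n, LD α 𝒜 n R Γ w A

/-- (Σ,𝒜)-validity of a labeled sequent. -/
def SeqValid (α : Alphabet) (𝒜 : Set (Ax α.Char)) (R : Multiset (Rel α.Char))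
    (Γ : Multiset (LF α.Char)) (w : ℕ) (A : Formula α.Char) : Prop :=
  ∀ (M : BiModel α), AModel 𝒜 M → ∀ I : ℕ → M.W,
    (∀ a ∈ R, M.R a.2.1 (I a.1) (I a.2.2)) → (∀ b ∈ Γ, Sat M (I b.1) b.2) →
      Sat M (I w) A

/-! ### Grammars and propagation -/

/-- Converse of a string: `s̄ = x̄ₙ⋯x̄₁` for `s = x₁⋯xₙ`. -/
def convStr {C : Type} (cv : C → C) (s : List C) : List C := (s.map cv).reverse

/-- The 𝒜-grammar `g(𝒜)`. -/
def Gram (α : Alphabet) (𝒜 : Set (Ax α.Char)) : Set (α.Char × List α.Char) :=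
  {p | Ax.ipa p.1 p.2 ∈ 𝒜 ∨
        ∃ x s, Ax.ipa x s ∈ 𝒜 ∧ p.1 = α.conv x ∧ p.2 = convStr α.conv s}

/-- One-step derivation between strings in a grammar. -/
def Step {C : Type} (g : Set (C × List C)) (s t : List C) : Prop :=
  ∃ s₁ s₂ x r, (x, r) ∈ g ∧ s = s₁ ++ x :: s₂ ∧ t = s₁ ++ r ++ s₂

/-- The language of the character `x` relative to a grammar. -/
def Lang {C : Type} (g : Set (C × List C)) (x : C) : Set (List C) :=
  {t | Relation.ReflTransGen (Step g) [x] t}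

/-- An edge of the propagation graph `PG(R)`. -/
def PGEdge (α : Alphabet) (R : Multiset (Rel α.Char)) (a : ℕ) (x : α.Char) (b : ℕ) : Prop :=
  (a, x, b) ∈ R ∨ (b, α.conv x, a) ∈ R

/-- `PPath α R w u s`: there is a propagation path from `w` to `u` in `PG(R)`
whose string is `s`. -/
inductive PPath (α : Alphabet) (R : Multiset (Rel α.Char)) : ℕ → ℕ → List α.Char → Prop
  | nil (w : ℕ) : PPath α R w w []
  | cons {w v u : ℕ} {x : α.Char} {s : List α.Char} :
      PGEdge α R w x v → PPath α R v u s → PPath α R w u (x :: s)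

/-- Side condition of the propagation rules: there exists a propagation path
`π(w,u)` in `PG(R)` with `s_π(w,u) ∈ L_{g(𝒜)}(x)`. -/
def CanProp (α : Alphabet) (𝒜 : Set (Ax α.Char)) (R : Multiset (Rel α.Char))
    (w u : ℕ) (x : α.Char) : Prop :=
  ∃ s, PPath α R w u s ∧ s ∈ Lang (Gram α 𝒜) x

/-- The refined labeled calculus `L*_Σ(𝒜)`, height-indexed. -/
inductive LDs (α : Alphabet) (𝒜 : Set (Ax α.Char)) :
    ℕ → Multiset (Rel α.Char) → Multiset (LF α.Char) → ℕ → Formula α.Char → Prop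
  | id (n : ℕ) (R : Multiset (Rel α.Char)) (Γ : Multiset (LF α.Char)) (w p : ℕ) : LDs α 𝒜 n R ((w, Formula.atom p) ::ₘ Γ) w (Formula.atom p)
  | botL (n : ℕ) (R : Multiset (Rel α.Char)) (Γ : Multiset (LF α.Char)) (w u : ℕ) (A : Formula α.Char) : LDs α 𝒜 n R ((w, Formula.bot) ::ₘ Γ) u A
  | orL {n : ℕ} {R : Multiset (Rel α.Char)} {Γ : Multiset (LF α.Char)} {w u : ℕ} {A B C : Formula α.Char} :
      LDs α 𝒜 n R ((w, A) ::ₘ Γ) u C → LDs α 𝒜 n R ((w, B) ::ₘ Γ) u C →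
      LDs α 𝒜 (n + 1) R ((w, A.or B) ::ₘ Γ) u C
  | orR1 {n : ℕ} {R : Multiset (Rel α.Char)} {Γ : Multiset (LF α.Char)} {w : ℕ} {A B : Formula α.Char} : LDs α 𝒜 n R Γ w A → LDs α 𝒜 (n + 1) R Γ w (A.or B)
  | orR2 {n : ℕ} {R : Multiset (Rel α.Char)} {Γ : Multiset (LF α.Char)} {w : ℕ} {A B : Formula α.Char} : LDs α 𝒜 n R Γ w B → LDs α 𝒜 (n + 1) R Γ w (A.or B)
  | andL {n : ℕ} {R : Multiset (Rel α.Char)} {Γ : Multiset (LF α.Char)} {w u : ℕ} {A B C : Formula α.Char} :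
      LDs α 𝒜 n R ((w, A) ::ₘ (w, B) ::ₘ Γ) u C →
      LDs α 𝒜 (n + 1) R ((w, A.and B) ::ₘ Γ) u C
  | andR {n : ℕ} {R : Multiset (Rel α.Char)} {Γ : Multiset (LF α.Char)} {w : ℕ} {A B : Formula α.Char} :
      LDs α 𝒜 n R Γ w A → LDs α 𝒜 n R Γ w B → LDs α 𝒜 (n + 1) R Γ w (A.and B)
  | impL {n : ℕ} {R : Multiset (Rel α.Char)} {Γ : Multiset (LF α.Char)} {w u : ℕ} {A B C : Formula α.Char} :
      LDs α 𝒜 n R ((w, A.imp B) ::ₘ Γ) w A → LDs α 𝒜 n R ((w, B) ::ₘ Γ) u C →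
      LDs α 𝒜 (n + 1) R ((w, A.imp B) ::ₘ Γ) u C
  | impR {n : ℕ} {R : Multiset (Rel α.Char)} {Γ : Multiset (LF α.Char)} {w : ℕ} {A B : Formula α.Char} :
      LDs α 𝒜 n R ((w, A) ::ₘ Γ) w B → LDs α 𝒜 (n + 1) R Γ w (A.imp B)
  | diaL {n : ℕ} {R : Multiset (Rel α.Char)} {Γ : Multiset (LF α.Char)} {w u v : ℕ} {x : α.Char} {A B : Formula α.Char} (hf : freshIn u R ((w, Formula.dia x A) ::ₘ Γ) v) :
      LDs α 𝒜 n ((w, x, u) ::ₘ R) ((u, A) ::ₘ Γ) v B →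
      LDs α 𝒜 (n + 1) R ((w, Formula.dia x A) ::ₘ Γ) v B
  | boxR {n : ℕ} {R : Multiset (Rel α.Char)} {Γ : Multiset (LF α.Char)} {w u : ℕ} {x : α.Char} {A : Formula α.Char} (hf : freshIn u R Γ w) :
      LDs α 𝒜 n ((w, x, u) ::ₘ R) Γ u A → LDs α 𝒜 (n + 1) R Γ w (Formula.box x A)
  | dx {n : ℕ} {R : Multiset (Rel α.Char)} {Γ : Multiset (LF α.Char)} {u v : ℕ} {x : α.Char} {A : Formula α.Char} (w : ℕ) (hax : Ax.ser x ∈ 𝒜) (hf : freshIn u R Γ v) :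
      LDs α 𝒜 n ((w, x, u) ::ₘ R) Γ v A → LDs α 𝒜 (n + 1) R Γ v A
  | pdia {n : ℕ} {R : Multiset (Rel α.Char)} {Γ : Multiset (LF α.Char)} {u : ℕ} {x : α.Char} {A : Formula α.Char} (w : ℕ) (h : CanProp α 𝒜 R w u x) :
      LDs α 𝒜 n R Γ u A → LDs α 𝒜 (n + 1) R Γ w (Formula.dia x A)
  | pbox {n : ℕ} {R : Multiset (Rel α.Char)} {Γ : Multiset (LF α.Char)} {w u v : ℕ} {x : α.Char} {A B : Formula α.Char} (h : CanProp α 𝒜 R w u x) :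
      LDs α 𝒜 n R ((w, Formula.box x A) ::ₘ (u, A) ::ₘ Γ) v B →
      LDs α 𝒜 (n + 1) R ((w, Formula.box x A) ::ₘ Γ) v B

/-- Derivability in `L*_Σ(𝒜)`. -/
def LDerivS (α : Alphabet) (𝒜 : Set (Ax α.Char)) (R : Multiset (Rel α.Char))
    (Γ : Multiset (LF α.Char)) (w : ℕ) (A : Formula α.Char) : Prop :=
  ∃ n, LDs α 𝒜 n R Γ w A

/-! ### Label substitutions -/

/-- `subL v u l`: replace the label `v` by `u`. -/
def subL (v u l : ℕ) : ℕ := if l = v then u else l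

def subR {C : Type} (v u : ℕ) (R : Multiset (Rel C)) : Multiset (Rel C) :=
  R.map (fun a => (subL v u a.1, a.2.1, subL v u a.2.2))

def subG {C : Type} (v u : ℕ) (Γ : Multiset (LF C)) : Multiset (LF C) :=
  Γ.map (fun b => (subL v u b.1, b.2))

/-! ### Double-negation translations -/

/-- The double-negation translation on `L_Σ`. -/
def dnt {C : Type} : Formula C → Formula C
  | Formula.atom p => ((Formula.atom p).neg).neg
  | Formula.bot => ((Formula.bot : Formula C).neg).neg
  | Formula.or A B => (((dnt A).neg).and ((dnt B).neg)).neg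
  | Formula.and A B => (dnt A).and (dnt B)
  | Formula.imp A B => (dnt A).imp (dnt B)
  | Formula.dia x A => (Formula.box x ((dnt A).neg)).neg
  | Formula.box x A => Formula.box x (dnt A)

/-! ### The classical language and calculi -/

/-- Formulae of the classical language `L^C_Σ` (negation normal form). -/
inductive CForm (C : Type) : Type
  | pos : ℕ → CForm C
  | neg : ℕ → CForm C
  | or  : CForm C → CForm C → CForm C
  | and : CForm C → CForm C → CForm C
  | dia : C → CForm C → CForm C
  | box : C → CForm C → CForm C

/-- Classical negation, recursively extended to all formulae of `L^C_Σ`. -/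
def cneg {C : Type} : CForm C → CForm C
  | CForm.pos p => CForm.neg p
  | CForm.neg p => CForm.pos p
  | CForm.or A B => CForm.and (cneg A) (cneg B)
  | CForm.and A B => CForm.or (cneg A) (cneg B)
  | CForm.dia x A => CForm.box x (cneg A)
  | CForm.box x A => CForm.dia x (cneg A)

/-- `⊥ := p ∧ ¬p` for a fixed propositional atom. -/
def cbot {C : Type} : CForm C := CForm.and (CForm.pos 0) (CForm.neg 0)

/-- `A ⊃ B := ¬A ∨ B`. -/
def cimp {C : Type} (A B : CForm C) : CForm C := CForm.or (cneg A) B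

/-- Reading a formula of `L_Σ` as a formula of `L^C_Σ`. -/
def toC {C : Type} : Formula C → CForm C
  | Formula.atom p => CForm.pos p
  | Formula.bot => cbot
  | Formula.or A B => CForm.or (toC A) (toC B)
  | Formula.and A B => CForm.and (toC A) (toC B)
  | Formula.imp A B => cimp (toC A) (toC B)
  | Formula.dia x A => CForm.dia x (toC A)
  | Formula.box x A => CForm.box x (toC A)

/-- A classical labeled formula. -/
abbrev CLF (C : Type) := ℕ × CForm C

def clfLabels {C : Type} (Γ : Multiset (CLF C)) : Set ℕ :=
  {l | ∃ b ∈ Γ, b.1 = l}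

/-- The refined labeled calculus `L^C_Σ(𝒜)` for the corresponding classical
grammar logic, operating on one-sided sequents `R ⊢ Γ`. -/
inductive CLD (α : Alphabet) (𝒜 : Set (Ax α.Char)) :
    Multiset (Rel α.Char) → Multiset (CLF α.Char) → Prop
  | id (R : Multiset (Rel α.Char)) (Γ : Multiset (CLF α.Char)) (w p : ℕ) :
      CLD α 𝒜 R ((w, CForm.pos p) ::ₘ (w, CForm.neg p) ::ₘ Γ)
  | orR {R : Multiset (Rel α.Char)} {Γ : Multiset (CLF α.Char)} {w : ℕ}
      {A B : CForm α.Char} :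
      CLD α 𝒜 R ((w, A) ::ₘ (w, B) ::ₘ Γ) → CLD α 𝒜 R ((w, CForm.or A B) ::ₘ Γ)
  | andR {R : Multiset (Rel α.Char)} {Γ : Multiset (CLF α.Char)} {w : ℕ}
      {A B : CForm α.Char} :
      CLD α 𝒜 R ((w, A) ::ₘ Γ) → CLD α 𝒜 R ((w, B) ::ₘ Γ) →
      CLD α 𝒜 R ((w, CForm.and A B) ::ₘ Γ)
  | boxR {R : Multiset (Rel α.Char)} {Γ : Multiset (CLF α.Char)} {w u : ℕ}
      {x : α.Char} {A : CForm α.Char}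
      (hf : u ∉ relLabels R ∧ u ∉ clfLabels ((w, CForm.box x A) ::ₘ Γ)) :
      CLD α 𝒜 ((w, x, u) ::ₘ R) ((u, A) ::ₘ Γ) →
      CLD α 𝒜 R ((w, CForm.box x A) ::ₘ Γ)
  | dx {R : Multiset (Rel α.Char)} {Γ : Multiset (CLF α.Char)} {u : ℕ}
      {x : α.Char} (w : ℕ) (hax : Ax.ser x ∈ 𝒜)
      (hf : u ∉ relLabels R ∧ u ∉ clfLabels Γ) :
      CLD α 𝒜 ((w, x, u) ::ₘ R) Γ → CLD α 𝒜 R Γ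
  | diaR {R : Multiset (Rel α.Char)} {Γ : Multiset (CLF α.Char)} {w u : ℕ}
      {x : α.Char} {A : CForm α.Char} (h : CanProp α 𝒜 R w u x) :
      CLD α 𝒜 R ((w, CForm.dia x A) ::ₘ (u, A) ::ₘ Γ) →
      CLD α 𝒜 R ((w, CForm.dia x A) ::ₘ Γ)

/-- `⟨x₁⟩⋯⟨xₙ⟩A` in the classical language. -/
def cdias {C : Type} : List C → CForm C → CForm C
  | [], A => A
  | x :: s, A => CForm.dia x (cdias s A)

/-- The Hilbert system for the classical grammar logic `K_m(Σ,𝒜')` corresponding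
to `IK_m(Σ,𝒜)`: seriality axioms of `𝒜` are kept and each intuitionistic path
axiom contributes the path axiom `⟨x₁⟩⋯⟨xₙ⟩A ⊃ ⟨x⟩A`. -/
inductive Kprf (α : Alphabet) (𝒜 : Set (Ax α.Char)) : CForm α.Char → Prop
  | cpl1 (A B : CForm α.Char) : Kprf α 𝒜 (cimp A (cimp B A))
  | cpl2 (A B C : CForm α.Char) :
      Kprf α 𝒜 (cimp (cimp A (cimp B C)) (cimp (cimp A B) (cimp A C)))
  | cpl3 (A B : CForm α.Char) : Kprf α 𝒜 (cimp A (CForm.or A B))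
  | cpl4 (A B : CForm α.Char) : Kprf α 𝒜 (cimp B (CForm.or A B))
  | cpl5 (A B C : CForm α.Char) :
      Kprf α 𝒜 (cimp (cimp A C) (cimp (cimp B C) (cimp (CForm.or A B) C)))
  | cpl6 (A B : CForm α.Char) : Kprf α 𝒜 (cimp (CForm.and A B) A)
  | cpl7 (A B : CForm α.Char) : Kprf α 𝒜 (cimp (CForm.and A B) B)
  | cpl8 (A B : CForm α.Char) : Kprf α 𝒜 (cimp A (cimp B (CForm.and A B)))
  | cpl9 (A : CForm α.Char) : Kprf α 𝒜 (cimp cbot A)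
  | cpl10 (A : CForm α.Char) : Kprf α 𝒜 (CForm.or A (cneg A))
  | axK (x : α.Char) (A B : CForm α.Char) :
      Kprf α 𝒜 (cimp (CForm.box x (cimp A B)) (cimp (CForm.box x A) (CForm.box x B)))
  | axConv (x : α.Char) (A : CForm α.Char) :
      Kprf α 𝒜 (cimp A (CForm.box x (CForm.dia (α.conv x) A)))
  | axSer (x : α.Char) (A : CForm α.Char) (h : Ax.ser x ∈ 𝒜) :
      Kprf α 𝒜 (cimp (CForm.box x A) (CForm.dia x A))
  | axPath (x : α.Char) (s : List α.Char) (A : CForm α.Char) (h : Ax.ipa x s ∈ 𝒜) :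
      Kprf α 𝒜 (cimp (cdias s A) (CForm.dia x A))
  | mp (A B : CForm α.Char) : Kprf α 𝒜 (cimp A B) → Kprf α 𝒜 A → Kprf α 𝒜 B
  | nec (x : α.Char) (A : CForm α.Char) : Kprf α 𝒜 A → Kprf α 𝒜 (CForm.box x A)

/-- The double-negation translation from `L^C_Σ` into `L_Σ`. -/
def dntC {C : Type} : CForm C → Formula C
  | CForm.pos p => ((Formula.atom p).neg).neg
  | CForm.neg p => (((Formula.atom p).neg).neg).neg
  | CForm.or A B => (((dntC A).neg).and ((dntC B).neg)).neg
  | CForm.and A B => (dntC A).and (dntC B)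
  | CForm.dia x A => (Formula.box x ((dntC A).neg)).neg
  | CForm.box x A => Formula.box x (dntC A)

/-! ### Labeled tree sequents and derivation trees -/

/-- Reachability along the relational atoms of `R`. -/
def Reach {C : Type} (R : Multiset (Rel C)) (a b : ℕ) : Prop :=
  Relation.ReflTransGen (fun p q => ∃ x, (p, x, q) ∈ R) a b

/-- `R, Γ ⊢ w : ⋯` is a labeled tree sequent with root `r`. -/
def isTreeSeqRoot (α : Alphabet) (R : Multiset (Rel α.Char))
    (Γ : Multiset (LF α.Char)) (w r : ℕ) : Prop :=
  (R = 0 → r = w ∧ ∀ b ∈ Γ, b.1 = w) ∧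
  (R ≠ 0 →
    (∀ a ∈ R, a.2.2 ≠ r) ∧
    (∀ l : ℕ, l ≠ r → (R.filter (fun a => a.2.2 = l)).card ≤ 1) ∧
    (∀ l ∈ relLabels R, Reach R r l) ∧
    (∀ b ∈ Γ, b.1 ∈ relLabels R) ∧ w ∈ relLabels R)

/-- Proof trees (derivations) in the refined labeled calculus `L*_Σ(𝒜)`. -/
inductive DTree (α : Alphabet) (𝒜 : Set (Ax α.Char)) :
    Multiset (Rel α.Char) → Multiset (LF α.Char) → ℕ → Formula α.Char → Type
  | id (R : Multiset (Rel α.Char)) (Γ : Multiset (LF α.Char)) (w p : ℕ) :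
      DTree α 𝒜 R ((w, Formula.atom p) ::ₘ Γ) w (Formula.atom p)
  | botL (R : Multiset (Rel α.Char)) (Γ : Multiset (LF α.Char)) (w u : ℕ)
      (A : Formula α.Char) : DTree α 𝒜 R ((w, Formula.bot) ::ₘ Γ) u A
  | orL (R : Multiset (Rel α.Char)) (Γ : Multiset (LF α.Char)) (w u : ℕ)
      (A B C : Formula α.Char) :
      DTree α 𝒜 R ((w, A) ::ₘ Γ) u C → DTree α 𝒜 R ((w, B) ::ₘ Γ) u C →
      DTree α 𝒜 R ((w, A.or B) ::ₘ Γ) u C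
  | orR1 (R : Multiset (Rel α.Char)) (Γ : Multiset (LF α.Char)) (w : ℕ)
      (A B : Formula α.Char) : DTree α 𝒜 R Γ w A → DTree α 𝒜 R Γ w (A.or B)
  | orR2 (R : Multiset (Rel α.Char)) (Γ : Multiset (LF α.Char)) (w : ℕ)
      (A B : Formula α.Char) : DTree α 𝒜 R Γ w B → DTree α 𝒜 R Γ w (A.or B)
  | andL (R : Multiset (Rel α.Char)) (Γ : Multiset (LF α.Char)) (w u : ℕ)
      (A B C : Formula α.Char) :
      DTree α 𝒜 R ((w, A) ::ₘ (w, B) ::ₘ Γ) u C →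
      DTree α 𝒜 R ((w, A.and B) ::ₘ Γ) u C
  | andR (R : Multiset (Rel α.Char)) (Γ : Multiset (LF α.Char)) (w : ℕ)
      (A B : Formula α.Char) :
      DTree α 𝒜 R Γ w A → DTree α 𝒜 R Γ w B → DTree α 𝒜 R Γ w (A.and B)
  | impL (R : Multiset (Rel α.Char)) (Γ : Multiset (LF α.Char)) (w u : ℕ)
      (A B C : Formula α.Char) :
      DTree α 𝒜 R ((w, A.imp B) ::ₘ Γ) w A → DTree α 𝒜 R ((w, B) ::ₘ Γ) u C →
      DTree α 𝒜 R ((w, A.imp B) ::ₘ Γ) u C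
  | impR (R : Multiset (Rel α.Char)) (Γ : Multiset (LF α.Char)) (w : ℕ)
      (A B : Formula α.Char) :
      DTree α 𝒜 R ((w, A) ::ₘ Γ) w B → DTree α 𝒜 R Γ w (A.imp B)
  | diaL (R : Multiset (Rel α.Char)) (Γ : Multiset (LF α.Char)) (w u v : ℕ)
      (x : α.Char) (A B : Formula α.Char)
      (hf : freshIn u R ((w, Formula.dia x A) ::ₘ Γ) v) :
      DTree α 𝒜 ((w, x, u) ::ₘ R) ((u, A) ::ₘ Γ) v B →
      DTree α 𝒜 R ((w, Formula.dia x A) ::ₘ Γ) v B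
  | boxR (R : Multiset (Rel α.Char)) (Γ : Multiset (LF α.Char)) (w u : ℕ)
      (x : α.Char) (A : Formula α.Char) (hf : freshIn u R Γ w) :
      DTree α 𝒜 ((w, x, u) ::ₘ R) Γ u A → DTree α 𝒜 R Γ w (Formula.box x A)
  | dx (R : Multiset (Rel α.Char)) (Γ : Multiset (LF α.Char)) (w u v : ℕ)
      (x : α.Char) (A : Formula α.Char) (hax : Ax.ser x ∈ 𝒜)
      (hf : freshIn u R Γ v) :
      DTree α 𝒜 ((w, x, u) ::ₘ R) Γ v A → DTree α 𝒜 R Γ v A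
  | pdia (R : Multiset (Rel α.Char)) (Γ : Multiset (LF α.Char)) (w u : ℕ)
      (x : α.Char) (A : Formula α.Char) (h : CanProp α 𝒜 R w u x) :
      DTree α 𝒜 R Γ u A → DTree α 𝒜 R Γ w (Formula.dia x A)
  | pbox (R : Multiset (Rel α.Char)) (Γ : Multiset (LF α.Char)) (w u v : ℕ)
      (x : α.Char) (A B : Formula α.Char) (h : CanProp α 𝒜 R w u x) :
      DTree α 𝒜 R ((w, Formula.box x A) ::ₘ (u, A) ::ₘ Γ) v B →
      DTree α 𝒜 R ((w, Formula.box x A) ::ₘ Γ) v B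

/-- `EverySeq P d`: every labeled sequent occurring in the derivation `d`
satisfies `P`. -/
def EverySeq {α : Alphabet} {𝒜 : Set (Ax α.Char)}
    (P : Multiset (Rel α.Char) → Multiset (LF α.Char) → ℕ → Formula α.Char → Prop) :
    ∀ {R : Multiset (Rel α.Char)} {Γ : Multiset (LF α.Char)} {w : ℕ}
      {A : Formula α.Char}, DTree α 𝒜 R Γ w A → Prop
  | _, _, _, _, DTree.id R Γ w p => P R ((w, Formula.atom p) ::ₘ Γ) w (Formula.atom p)
  | _, _, _, _, DTree.botL R Γ w u A => P R ((w, Formula.bot) ::ₘ Γ) u A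
  | _, _, _, _, DTree.orL R Γ w u A B C d1 d2 =>
      P R ((w, A.or B) ::ₘ Γ) u C ∧ EverySeq P d1 ∧ EverySeq P d2
  | _, _, _, _, DTree.orR1 R Γ w A B d => P R Γ w (A.or B) ∧ EverySeq P d
  | _, _, _, _, DTree.orR2 R Γ w A B d => P R Γ w (A.or B) ∧ EverySeq P d
  | _, _, _, _, DTree.andL R Γ w u A B C d =>
      P R ((w, A.and B) ::ₘ Γ) u C ∧ EverySeq P d
  | _, _, _, _, DTree.andR R Γ w A B d1 d2 =>
      P R Γ w (A.and B) ∧ EverySeq P d1 ∧ EverySeq P d2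
  | _, _, _, _, DTree.impL R Γ w u A B C d1 d2 =>
      P R ((w, A.imp B) ::ₘ Γ) u C ∧ EverySeq P d1 ∧ EverySeq P d2
  | _, _, _, _, DTree.impR R Γ w A B d => P R Γ w (A.imp B) ∧ EverySeq P d
  | _, _, _, _, DTree.diaL R Γ w u v x A B _ d =>
      P R ((w, Formula.dia x A) ::ₘ Γ) v B ∧ EverySeq P d
  | _, _, _, _, DTree.boxR R Γ w u x A _ d =>
      P R Γ w (Formula.box x A) ∧ EverySeq P d
  | _, _, _, _, DTree.dx R Γ w u v x A _ _ d => P R Γ v A ∧ EverySeq P d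
  | _, _, _, _, DTree.pdia R Γ w u x A _ d =>
      P R Γ w (Formula.dia x A) ∧ EverySeq P d
  | _, _, _, _, DTree.pbox R Γ w u v x A B _ d =>
      P R ((w, Formula.box x A) ::ₘ Γ) v B ∧ EverySeq P d

/-! ### Auxiliary lemmas for structural rule elimination -/

section Aux

variable {α : Alphabet} {𝒜 : Set (Ax α.Char)}

lemma relLabels_mono {C : Type} {R R' : Multiset (Rel C)} (h : R ≤ R') :
    relLabels R ⊆ relLabels R' := by
  rintro l ⟨a, ha, ho⟩
  exact ⟨a, Multiset.mem_of_le h ha, ho⟩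

lemma relLabels_cons_subset {C : Type} {a : Rel C} {R2 R' : Multiset (Rel C)}
    (h : relLabels R2 ⊆ relLabels R') : relLabels (a ::ₘ R2) ⊆ relLabels (a ::ₘ R') := by
  rintro l ⟨b, hb, ho⟩
  rcases Multiset.mem_cons.mp hb with rfl | hb
  · exact ⟨b, Multiset.mem_cons_self _ _, ho⟩
  · obtain ⟨c, hc, ho'⟩ := h ⟨b, hb, ho⟩
    exact ⟨c, Multiset.mem_cons_of_mem hc, ho'⟩

lemma PGEdge.mono {R R' : Multiset (Rel α.Char)} (h : R ≤ R') {a b : ℕ} {x : α.Char}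
    (e : PGEdge α R a x b) : PGEdge α R' a x b := by
  rcases e with hm | hm
  · exact Or.inl (Multiset.mem_of_le h hm)
  · exact Or.inr (Multiset.mem_of_le h hm)

lemma PPath.mono {R R' : Multiset (Rel α.Char)} (h : R ≤ R') {a b : ℕ} {s : List α.Char}
    (p : PPath α R a b s) : PPath α R' a b s := by
  induction p with
  | nil w => exact .nil w
  | cons e _ ih => exact .cons (e.mono h) ih

lemma PPath.append {R : Multiset (Rel α.Char)} {a b c : ℕ} {s t : List α.Char}
    (p : PPath α R a b s) (q : PPath α R b c t) : PPath α R a c (s ++ t) := by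
  induction p with
  | nil w => exact q
  | cons e _ ih => exact .cons e (ih q)

lemma rt_step_append {C : Type} {g : Set (C × List C)} {s s' t t' : List C}
    (h1 : Relation.ReflTransGen (Step g) s s')
    (h2 : Relation.ReflTransGen (Step g) t t') :
    Relation.ReflTransGen (Step g) (s ++ t) (s' ++ t') := by
  have A : Relation.ReflTransGen (Step g) (s ++ t) (s' ++ t) := by
    refine Relation.ReflTransGen.lift (· ++ t) (fun a b hab => ?_) _ _ h1
    obtain ⟨s1, s2, x, r, hg, rfl, rfl⟩ := hab
    exact ⟨s1, s2 ++ t, x, r, hg, by simp, by simp⟩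
  have B : Relation.ReflTransGen (Step g) (s' ++ t) (s' ++ t') := by
    refine Relation.ReflTransGen.lift (s' ++ ·) (fun a b hab => ?_) _ _ h2
    obtain ⟨s1, s2, x, r, hg, rfl, rfl⟩ := hab
    exact ⟨s' ++ s1, s2, x, r, hg, by simp, by simp⟩
  exact A.trans B

/-- Simulation between relational multisets: every edge of `PG(R')` can be
replaced by a propagation path in `PG(R2)` whose string is grammar-derivable
from the edge's character. -/
def EdgeSim (α : Alphabet) (𝒜 : Set (Ax α.Char)) (R' R2 : Multiset (Rel α.Char)) : Prop :=
  ∀ a x b, PGEdge α R' a x b →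
    ∃ r, PPath α R2 a b r ∧ Relation.ReflTransGen (Step (Gram α 𝒜)) [x] r

lemma PGEdge.selfSim {R2 : Multiset (Rel α.Char)} {p q : ℕ} {y : α.Char}
    (e : PGEdge α R2 p y q) :
    ∃ r, PPath α R2 p q r ∧ Relation.ReflTransGen (Step (Gram α 𝒜)) [y] r :=
  ⟨[y], .cons e (.nil q), Relation.ReflTransGen.refl⟩

lemma EdgeSim.cons {R' R2 : Multiset (Rel α.Char)} (hs : EdgeSim α 𝒜 R' R2)
    (a : Rel α.Char) : EdgeSim α 𝒜 (a ::ₘ R') (a ::ₘ R2) := by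
  intro p y q e
  rcases e with hm | hm
  · rcases Multiset.mem_cons.mp hm with he | hm'
    · exact PGEdge.selfSim (Or.inl (by rw [he]; exact Multiset.mem_cons_self _ _))
    · obtain ⟨r, hr, hd⟩ := hs p y q (Or.inl hm')
      exact ⟨r, hr.mono (Multiset.le_cons_self _ _), hd⟩
  · rcases Multiset.mem_cons.mp hm with he | hm'
    · exact PGEdge.selfSim (Or.inr (by rw [he]; exact Multiset.mem_cons_self _ _))
    · obtain ⟨r, hr, hd⟩ := hs p y q (Or.inr hm')
      exact ⟨r, hr.mono (Multiset.le_cons_self _ _), hd⟩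

lemma PPath.sim {R' R2 : Multiset (Rel α.Char)} (hs : EdgeSim α 𝒜 R' R2)
    {a b : ℕ} {s : List α.Char} (h : PPath α R' a b s) :
    ∃ t, PPath α R2 a b t ∧ Relation.ReflTransGen (Step (Gram α 𝒜)) s t := by
  induction h with
  | nil w => exact ⟨[], .nil w, Relation.ReflTransGen.refl⟩
  | cons e _ ih =>
    obtain ⟨r, hr, hd⟩ := hs _ _ _ e
    obtain ⟨t, ht, hd2⟩ := ih
    exact ⟨r ++ t, hr.append ht, rt_step_append hd hd2⟩

lemma CanProp.sim {R' R2 : Multiset (Rel α.Char)} (hs : EdgeSim α 𝒜 R' R2)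
    {w u : ℕ} {x : α.Char} (h : CanProp α 𝒜 R' w u x) : CanProp α 𝒜 R2 w u x := by
  obtain ⟨s, hp, hl⟩ := h
  obtain ⟨t, ht, hd⟩ := hp.sim hs
  exact ⟨t, ht, Relation.ReflTransGen.trans hl hd⟩

/-- Key simulation lemma: derivability in `L*_Σ(𝒜)` is preserved when the
relational multiset is replaced by one that simulates it edge-wise and has no
new labels. -/
lemma LDs_sim : ∀ {n : ℕ} {R' : Multiset (Rel α.Char)} {Γ : Multiset (LF α.Char)}
    {v : ℕ} {A : Formula α.Char}, LDs α 𝒜 n R' Γ v A →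
    ∀ R2, EdgeSim α 𝒜 R' R2 → relLabels R2 ⊆ relLabels R' → LDs α 𝒜 n R2 Γ v A := by
  intro n R' Γ v A h
  induction h with
  | id n R Γ w p => exact fun R2 _ _ => .id n R2 Γ w p
  | botL n R Γ w u A => exact fun R2 _ _ => .botL n R2 Γ w u A
  | orL _ _ ih1 ih2 =>
    exact fun R2 hs hsub => .orL (ih1 R2 hs hsub) (ih2 R2 hs hsub)
  | orR1 _ ih => exact fun R2 hs hsub => .orR1 (ih R2 hs hsub)
  | orR2 _ ih => exact fun R2 hs hsub => .orR2 (ih R2 hs hsub)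
  | andL _ ih => exact fun R2 hs hsub => .andL (ih R2 hs hsub)
  | andR _ _ ih1 ih2 =>
    exact fun R2 hs hsub => .andR (ih1 R2 hs hsub) (ih2 R2 hs hsub)
  | impL _ _ ih1 ih2 =>
    exact fun R2 hs hsub => .impL (ih1 R2 hs hsub) (ih2 R2 hs hsub)
  | impR _ ih => exact fun R2 hs hsub => .impR (ih R2 hs hsub)
  | diaL hf _ ih =>
    intro R2 hs hsub
    exact .diaL ⟨fun hc => hf.1 (hsub hc), hf.2.1, hf.2.2⟩
      (ih _ (hs.cons _) (relLabels_cons_subset hsub))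
  | boxR hf _ ih =>
    intro R2 hs hsub
    exact .boxR ⟨fun hc => hf.1 (hsub hc), hf.2.1, hf.2.2⟩
      (ih _ (hs.cons _) (relLabels_cons_subset hsub))
  | dx w hax hf _ ih =>
    intro R2 hs hsub
    exact .dx w hax ⟨fun hc => hf.1 (hsub hc), hf.2.1, hf.2.2⟩
      (ih _ (hs.cons _) (relLabels_cons_subset hsub))
  | pdia w hcp _ ih =>
    intro R2 hs hsub
    exact .pdia w (hcp.sim hs) (ih R2 hs hsub)
  | pbox hcp _ ih =>
    intro R2 hs hsub
    exact .pbox (hcp.sim hs) (ih R2 hs hsub)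

lemma convStr_cons {C : Type} (cv : C → C) (x : C) (s : List C) :
    convStr cv (x :: s) = convStr cv s ++ [cv x] := by simp [convStr]

lemma Chain.ppath {s : List α.Char} {w u : ℕ} {m : Multiset (Rel α.Char)}
    (h : Chain s w u m) : ∀ {R : Multiset (Rel α.Char)}, m ≤ R → PPath α R w u s := by
  induction h with
  | nil w => exact fun _ => .nil w
  | @cons x s w v u m _ ih =>
    intro R hm
    refine .cons (Or.inl (Multiset.mem_of_le hm (Multiset.mem_cons_self _ _))) ?_
    exact ih (le_trans (Multiset.le_cons_self _ _) hm)

lemma Chain.ppath_rev {s : List α.Char} {w u : ℕ} {m : Multiset (Rel α.Char)}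
    (h : Chain s w u m) : ∀ {R : Multiset (Rel α.Char)}, m ≤ R →
      PPath α R u w (convStr α.conv s) := by
  induction h with
  | nil w =>
    intro R _
    have : convStr α.conv ([] : List α.Char) = [] := by simp [convStr]
    rw [this]; exact .nil w
  | @cons x s w v u m _ ih =>
    intro R hm
    rw [convStr_cons]
    have hmem : (w, x, v) ∈ R := Multiset.mem_of_le hm (Multiset.mem_cons_self _ _)
    have e : PGEdge α R v (α.conv x) w := Or.inr (by rw [α.conv_conv]; exact hmem)
    exact (ih (le_trans (Multiset.le_cons_self _ _) hm)).append (.cons e (.nil w))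

lemma edgeSim_isx {x : α.Char} {s : List α.Char} {w u : ℕ}
    {m R : Multiset (Rel α.Char)} (hax : Ax.ipa x s ∈ 𝒜) (hc : Chain s w u m) :
    EdgeSim α 𝒜 ((w, x, u) ::ₘ (m + R)) (m + R) := by
  intro p y q e
  rcases e with hm | hm
  · rcases Multiset.mem_cons.mp hm with he | hm'
    · obtain ⟨rfl, rfl, rfl⟩ : p = w ∧ y = x ∧ q = u := by
        simpa [Prod.ext_iff] using he
      refine ⟨s, hc.ppath (Multiset.le_add_right _ _), Relation.ReflTransGen.single ?_⟩
      exact ⟨[], [], _, s, Or.inl hax, rfl, by simp⟩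
    · exact PGEdge.selfSim (Or.inl hm')
  · rcases Multiset.mem_cons.mp hm with he | hm'
    · obtain ⟨rfl, hy, rfl⟩ : q = w ∧ α.conv y = x ∧ p = u := by
        simpa [Prod.ext_iff] using he
      have hy' : y = α.conv x := by rw [← hy, α.conv_conv]
      subst hy'
      refine ⟨convStr α.conv s, hc.ppath_rev (Multiset.le_add_right _ _),
        Relation.ReflTransGen.single ?_⟩
      exact ⟨[], [], α.conv x, convStr α.conv s, Or.inr ⟨x, s, hax, rfl, rfl⟩, rfl, by simp⟩
    · exact PGEdge.selfSim (Or.inr hm')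

lemma edgeSim_cx {x : α.Char} {w u : ℕ} {R : Multiset (Rel α.Char)} :
    EdgeSim α 𝒜 ((w, x, u) ::ₘ (u, α.conv x, w) ::ₘ R) ((w, x, u) ::ₘ R) := by
  intro p y q e
  rcases e with hm | hm
  · rcases Multiset.mem_cons.mp hm with he | hm'
    · exact PGEdge.selfSim (Or.inl (by rw [he]; exact Multiset.mem_cons_self _ _))
    · rcases Multiset.mem_cons.mp hm' with he | hm''
      · obtain ⟨rfl, rfl, rfl⟩ : p = u ∧ y = α.conv x ∧ q = w := by
          simpa [Prod.ext_iff] using he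
        exact PGEdge.selfSim (Or.inr (by rw [α.conv_conv]; exact Multiset.mem_cons_self _ _))
      · exact PGEdge.selfSim (Or.inl (Multiset.mem_cons_of_mem hm''))
  · rcases Multiset.mem_cons.mp hm with he | hm'
    · exact PGEdge.selfSim (Or.inr (by rw [he]; exact Multiset.mem_cons_self _ _))
    · rcases Multiset.mem_cons.mp hm' with he | hm''
      · obtain ⟨rfl, hy, rfl⟩ : q = u ∧ α.conv y = α.conv x ∧ p = w := by
          simpa [Prod.ext_iff] using he
        have hy' : y = x := by
          have := congrArg α.conv hy
          rwa [α.conv_conv, α.conv_conv] at this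
        subst hy'
        exact PGEdge.selfSim (Or.inl (Multiset.mem_cons_self _ _))
      · exact PGEdge.selfSim (Or.inr (Multiset.mem_cons_of_mem hm''))

lemma LDs.up : ∀ {n : ℕ} {R : Multiset (Rel α.Char)} {Γ : Multiset (LF α.Char)}
    {w : ℕ} {A : Formula α.Char}, LDs α 𝒜 n R Γ w A → LDs α 𝒜 (n + 1) R Γ w A := by
  intro n R Γ w A h
  induction h with
  | id n R Γ w p => exact .id _ R Γ w p
  | botL n R Γ w u A => exact .botL _ R Γ w u A
  | orL _ _ ih1 ih2 => exact .orL ih1 ih2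
  | orR1 _ ih => exact .orR1 ih
  | orR2 _ ih => exact .orR2 ih
  | andL _ ih => exact .andL ih
  | andR _ _ ih1 ih2 => exact .andR ih1 ih2
  | impL _ _ ih1 ih2 => exact .impL ih1 ih2
  | impR _ ih => exact .impR ih
  | diaL hf _ ih => exact .diaL hf ih
  | boxR hf _ ih => exact .boxR hf ih
  | dx w hax hf _ ih => exact .dx w hax hf ih
  | pdia w hcp _ ih => exact .pdia w hcp ih
  | pbox hcp _ ih => exact .pbox hcp ih

lemma LDs.le_height {n m : ℕ} {R : Multiset (Rel α.Char)} {Γ : Multiset (LF α.Char)}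
    {w : ℕ} {A : Formula α.Char} (h : LDs α 𝒜 n R Γ w A) (hle : n ≤ m) :
    LDs α 𝒜 m R Γ w A := by
  induction hle with
  | refl => exact h
  | step _ ih => exact ih.up

end Aux

/-- **Structural rule elimination**: every labeled sequent derivable in
`L_Σ(𝒜)` is derivable in the refined calculus `L*_Σ(𝒜)`. -/
theorem structural_rule_elimination (α : Alphabet) (𝒜 : Set (Ax α.Char))
    (R : Multiset (Rel α.Char)) (Γ : Multiset (LF α.Char)) (w : ℕ)
    (A : Formula α.Char) (h : LDeriv α 𝒜 R Γ w A) :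
    LDerivS α 𝒜 R Γ w A := by
  obtain ⟨n, hd⟩ := h
  induction hd with
  | id n R Γ w p => exact ⟨0, .id 0 R Γ w p⟩
  | botL n R Γ w u A => exact ⟨0, .botL 0 R Γ w u A⟩
  | orL _ _ ih1 ih2 =>
    obtain ⟨n1, d1⟩ := ih1
    obtain ⟨n2, d2⟩ := ih2
    exact ⟨max n1 n2 + 1,
      .orL (d1.le_height (le_max_left _ _)) (d2.le_height (le_max_right _ _))⟩
  | orR1 _ ih =>
    obtain ⟨n1, d1⟩ := ih
    exact ⟨n1 + 1, .orR1 d1⟩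
  | orR2 _ ih =>
    obtain ⟨n1, d1⟩ := ih
    exact ⟨n1 + 1, .orR2 d1⟩
  | andL _ ih =>
    obtain ⟨n1, d1⟩ := ih
    exact ⟨n1 + 1, .andL d1⟩
  | andR _ _ ih1 ih2 =>
    obtain ⟨n1, d1⟩ := ih1
    obtain ⟨n2, d2⟩ := ih2
    exact ⟨max n1 n2 + 1,
      .andR (d1.le_height (le_max_left _ _)) (d2.le_height (le_max_right _ _))⟩
  | impL _ _ ih1 ih2 =>
    obtain ⟨n1, d1⟩ := ih1
    obtain ⟨n2, d2⟩ := ih2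
    exact ⟨max n1 n2 + 1,
      .impL (d1.le_height (le_max_left _ _)) (d2.le_height (le_max_right _ _))⟩
  | impR _ ih =>
    obtain ⟨n1, d1⟩ := ih
    exact ⟨n1 + 1, .impR d1⟩
  | diaL hf _ ih =>
    obtain ⟨n1, d1⟩ := ih
    exact ⟨n1 + 1, .diaL hf d1⟩
  | @diaR n R Γ w u x A _ ih =>
    obtain ⟨n1, d1⟩ := ih
    have hcp : CanProp α 𝒜 ((w, x, u) ::ₘ R) w u x :=
      ⟨[x], .cons (Or.inl (Multiset.mem_cons_self _ _)) (.nil u),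
        Relation.ReflTransGen.refl⟩
    exact ⟨n1 + 1, .pdia w hcp d1⟩
  | boxR hf _ ih =>
    obtain ⟨n1, d1⟩ := ih
    exact ⟨n1 + 1, .boxR hf d1⟩
  | @boxL n R Γ w u v x A C _ ih =>
    obtain ⟨n1, d1⟩ := ih
    have hcp : CanProp α 𝒜 ((w, x, u) ::ₘ R) w u x :=
      ⟨[x], .cons (Or.inl (Multiset.mem_cons_self _ _)) (.nil u),
        Relation.ReflTransGen.refl⟩
    exact ⟨n1 + 1, .pbox hcp d1⟩
  | dx w hax hf _ ih =>
    obtain ⟨n1, d1⟩ := ih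
    exact ⟨n1 + 1, .dx w hax hf d1⟩
  | @isx n R Γ w u v s x m A hax hc _ ih =>
    obtain ⟨n1, d1⟩ := ih
    exact ⟨n1, LDs_sim d1 (m + R) (edgeSim_isx hax hc)
      (relLabels_mono (Multiset.le_cons_self _ _))⟩
  | @cx n R Γ w u v x A _ ih =>
    obtain ⟨n1, d1⟩ := ih
    exact ⟨n1, LDs_sim d1 ((w, x, u) ::ₘ R) edgeSim_cx
      (relLabels_mono (Multiset.cons_le_cons _ (Multiset.le_cons_self _ _)))⟩

end IGL
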